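/- For d = 1, let f_α(x) = max(0, 1 - x/α) for 0 < α ≤ 1 and g(x) = 0 on [0,1]. Then for 1 ≤ p < ∞, ||f_α - g||_p = α^{1/p}/(1+p)^{1/p}, and the Hausdorff distance between the truncated epigraphs satisfies ℓ_H(V_{f_α}(1), V_g(1)) = α/√(1+α²). -/

import Mathlib

/-- Truncated epigraph of `h : [0,1] → ℝ` as a subset of `ℝ²` with the Euclidean metric. -/
def truncEpigraph1 (h : ℝ → ℝ) : Set (EuclideanSpace ℝ (Fin 2)) :=
  {z | z 0 ∈ Set.Icc (0:ℝ) 1 ∧ h (z 0) ≤ z 1 ∧ z 1 ≤ 1}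

noncomputable def pt2' (a b : ℝ) : EuclideanSpace ℝ (Fin 2) :=
  (WithLp.equiv 2 (Fin 2 → ℝ)).symm ![a, b]

lemma dist_eucl2 (z w : EuclideanSpace ℝ (Fin 2)) :
    dist z w = Real.sqrt ((z 0 - w 0)^2 + (z 1 - w 1)^2) := by
  rw [EuclideanSpace.dist_eq, Fin.sum_univ_two]; simp [Real.dist_eq, sq_abs]

lemma my_le_infDist {X : Type*} [PseudoMetricSpace X] {s : Set X} {x : X} {r : ℝ}
    (hs : s.Nonempty) (h : ∀ y ∈ s, r ≤ dist x y) : r ≤ Metric.infDist x s := by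
  obtain ⟨y0, hy0⟩ := hs
  have hfin : Metric.infEDist x s ≠ ⊤ :=
    ne_top_of_le_ne_top (edist_ne_top x y0) (EMetric.infEdist_le_edist_of_mem hy0)
  rw [Metric.infDist, ← ENNReal.ofReal_le_iff_le_toReal hfin]
  refine EMetric.le_infEdist.2 fun y hy => ?_
  rw [edist_dist]
  exact ENNReal.ofReal_le_ofReal (h y hy)

set_option maxHeartbeats 2000000 in
theorem Lp_vs_hausdorff_counterexample (α p : ℝ) (hα : 0 < α) (hα1 : α ≤ 1) (hp : 1 ≤ p) :
    (∫ x in Set.Icc (0:ℝ) 1, |max 0 (1 - x / α) - 0| ^ p) ^ (1/p)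
        = α ^ (1/p) / (1 + p) ^ (1/p) ∧
    Metric.hausdorffDist (truncEpigraph1 (fun x => max 0 (1 - x / α)))
        (truncEpigraph1 (fun _ => 0)) = α / Real.sqrt (1 + α ^ 2) := by
  have hp0 : (0:ℝ) < p := lt_of_lt_of_le one_pos hp
  constructor
  · -- Part 1: the Lᵖ norm computation
    have key : (∫ x in Set.Icc (0:ℝ) 1, |max 0 (1 - x / α) - 0| ^ p) = α / (1 + p) := by
      rw [MeasureTheory.integral_Icc_eq_integral_Ioc,
        ← intervalIntegral.integral_of_le (zero_le_one (α := ℝ))]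
      have hcont : Continuous fun x : ℝ => |max 0 (1 - x / α) - 0| ^ p := by
        apply Continuous.rpow_const
        · fun_prop
        · exact fun _ => Or.inr hp0.le
      have hint : ∀ a b : ℝ, IntervalIntegrable
          (fun x => |max 0 (1 - x / α) - 0| ^ p) MeasureTheory.volume a b :=
        fun a b => hcont.intervalIntegrable a b
      rw [← intervalIntegral.integral_add_adjacent_intervals (hint 0 α) (hint α 1)]
      have h1 : (∫ x in (0:ℝ)..α, |max 0 (1 - x / α) - 0| ^ p)
          = ∫ x in (0:ℝ)..α, (fun u => u ^ p) ((1 : ℝ) - x / α) := by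
        apply intervalIntegral.integral_congr
        intro x hx
        rw [Set.uIcc_of_le hα.le] at hx
        have hx1 : x / α ≤ 1 := (div_le_one hα).2 hx.2
        have h0 : (0:ℝ) ≤ 1 - x / α := by linarith
        simp [max_eq_right h0, abs_of_nonneg h0]
      have h2 : (∫ x in α..(1:ℝ), |max 0 (1 - x / α) - 0| ^ p) = 0 := by
        have : (∫ x in α..(1:ℝ), |max 0 (1 - x / α) - 0| ^ p)
            = ∫ x in α..(1:ℝ), (0:ℝ) := by
          apply intervalIntegral.integral_congr
          intro x hx
          rw [Set.uIcc_of_le hα1] at hx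
          have hx1 : (1:ℝ) ≤ x / α := (one_le_div hα).2 hx.1
          have h0 : 1 - x / α ≤ 0 := by linarith
          simp [max_eq_left h0, Real.zero_rpow hp0.ne']
        rw [this]; simp
      rw [h1, h2, add_zero]
      have hsub : (∫ x in (0:ℝ)..α, ((1:ℝ) - x / α) ^ p)
          = α • ∫ x in (0:ℝ)/α..α/α, ((1:ℝ) - x) ^ p :=
        intervalIntegral.integral_comp_div (fun u => ((1:ℝ) - u) ^ p) hα.ne'
      rw [hsub, zero_div, div_self hα.ne',
        intervalIntegral.integral_comp_sub_left (fun v => v ^ p) 1]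
      norm_num
      rw [integral_rpow (Or.inl (by linarith))]
      rw [Real.one_rpow, Real.zero_rpow (by positivity)]
      rw [sub_zero, mul_one_div, add_comm p 1]
    rw [key, Real.div_rpow hα.le (by linarith)]
  · -- Part 2: the Hausdorff distance computation
    set A := truncEpigraph1 (fun x => max 0 (1 - x / α)) with hA
    set B := truncEpigraph1 (fun _ => (0:ℝ)) with hB
    have hs2 : (0:ℝ) < 1 + α ^ 2 := by positivity
    have hsq : Real.sqrt (1 + α ^ 2) > 0 := Real.sqrt_pos.2 hs2
    have hsq1 : (1:ℝ) ≤ Real.sqrt (1 + α ^ 2) :=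
      (Real.le_sqrt zero_le_one hs2.le).2 (by nlinarith)
    set r := α / Real.sqrt (1 + α ^ 2) with hr
    have hr0 : 0 ≤ r := div_nonneg hα.le hsq.le
    have hrα : r ≤ α := by
      rw [hr, div_le_iff₀ hsq]; nlinarith
    -- membership of the corner point (1,1) in both sets
    have hone : ∀ h : ℝ → ℝ, h 1 ≤ 1 → pt2' 1 1 ∈ truncEpigraph1 h := by
      intro h hh
      refine ⟨⟨?_, ?_⟩, ?_, ?_⟩ <;> simp [pt2', truncEpigraph1, hh]
    have hf1 : max 0 (1 - (1:ℝ) / α) ≤ 1 := by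
      apply max_le zero_le_one
      have : (0:ℝ) ≤ 1 / α := by positivity
      linarith
    have hAne : A.Nonempty := ⟨pt2' 1 1, hone _ hf1⟩
    have hBne : B.Nonempty := ⟨pt2' 1 1, hone _ zero_le_one⟩
    -- A ⊆ B
    have hAB : ∀ z, z ∈ A → z ∈ B := by
      rintro z ⟨hz0, hz1, hz2⟩
      exact ⟨hz0, le_trans (le_max_left _ _) hz1, hz2⟩
    -- boundedness
    have hbdd : ∀ h : ℝ → ℝ, (∀ x, 0 ≤ h x) →
        Bornology.IsBounded (truncEpigraph1 h) := by
      intro h hh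
      apply Bornology.IsBounded.subset (Metric.isBounded_closedBall (x := pt2' 0 0) (r := 2))
      rintro z ⟨⟨hz0, hz1⟩, hz2, hz3⟩
      have hz2' : 0 ≤ z 1 := le_trans (hh _) hz2
      rw [Metric.mem_closedBall, dist_eucl2]
      have : (z 0 - pt2' 0 0 0)^2 + (z 1 - pt2' 0 0 1)^2 ≤ 4 := by
        have e0 : pt2' 0 0 0 = 0 := rfl
        have e1 : pt2' (0:ℝ) 0 1 = 0 := rfl
        rw [e0, e1]; nlinarith
      calc Real.sqrt ((z 0 - pt2' 0 0 0)^2 + (z 1 - pt2' 0 0 1)^2)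
          ≤ Real.sqrt 4 := Real.sqrt_le_sqrt this
        _ = 2 := by rw [show (4:ℝ) = 2^2 by norm_num, Real.sqrt_sq (by norm_num)]
    have hbddA : Bornology.IsBounded A := hbdd _ (fun x => le_max_left _ _)
    have hbddB : Bornology.IsBounded B := hbdd _ (fun _ => le_refl 0)
    have hfin : EMetric.hausdorffEdist A B ≠ ⊤ :=
      Metric.hausdorffEdist_ne_top_of_nonempty_of_bounded hAne hBne hbddA hbddB
    -- every point of B is within r of A
    have hBA : ∀ z ∈ B, ∃ w ∈ A, dist z w ≤ r := by
      rintro z ⟨⟨hz0, hz1⟩, hz2, hz3⟩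
      have hz2' : (0:ℝ) ≤ z 1 := hz2
      by_cases hcase : max 0 (1 - z 0 / α) ≤ z 1
      · exact ⟨z, ⟨⟨hz0, hz1⟩, hcase, hz3⟩, by simp [hr0]⟩
      · push_neg at hcase
        have h5 : z 1 < 1 - z 0 / α := by
          by_contra h
          push_neg at h
          exact absurd (max_le hz2' h) (not_le.2 hcase)
        have hz0α : z 0 < α := by
          have : z 0 / α < 1 := by linarith
          exact (div_lt_one hα).1 this
        set t := α - z 0 - α * z 1 with ht
        have hcancel : α * (z 0 / α) = z 0 := mul_div_cancel₀ _ hα.ne'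
        have ht0 : 0 < t := by nlinarith [mul_lt_mul_of_pos_left h5 hα]
        have ht1 : t ≤ α := by nlinarith [mul_nonneg hα.le hz2]
        set w0 := z 0 + t / (1 + α ^ 2) with hw0
        set w1 := z 1 + t * α / (1 + α ^ 2) with hw1
        have hline : w0 + α * w1 = α := by
          rw [hw0, hw1]; field_simp; ring
        have hw0nn : 0 ≤ w0 := by positivity
        have hw0α : w0 ≤ α := by
          have : t / (1 + α ^ 2) ≤ α - z 0 := by
            rw [div_le_iff₀ hs2]; nlinarith [mul_nonneg hα.le hz2]
          rw [hw0]; linarith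
        have hw1nn : 0 ≤ w1 := by positivity
        have hw1eq : 1 - w0 / α = w1 := by
          field_simp
          linarith [hline]
        have hw1le : w1 ≤ 1 := by
          rw [← hw1eq]
          have : 0 ≤ w0 / α := div_nonneg hw0nn hα.le
          linarith
        refine ⟨pt2' w0 w1, ⟨⟨hw0nn, hw0α.trans hα1⟩, ?_, hw1le⟩, ?_⟩
        · show max 0 (1 - pt2' w0 w1 0 / α) ≤ pt2' w0 w1 1
          have e0 : pt2' w0 w1 0 = w0 := rfl
          have e1 : pt2' w0 w1 1 = w1 := rfl
          rw [e0, e1, hw1eq]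
          exact max_le hw1nn le_rfl
        · have e0 : pt2' w0 w1 0 = w0 := rfl
          have e1 : pt2' w0 w1 1 = w1 := rfl
          rw [dist_eucl2, e0, e1]
          have hsum : (z 0 - w0)^2 + (z 1 - w1)^2 = t^2 / (1 + α^2) := by
            rw [hw0, hw1]; field_simp; ring
          rw [hsum, Real.sqrt_div (sq_nonneg t), Real.sqrt_sq ht0.le, hr]
          gcongr
    have hle : Metric.hausdorffDist A B ≤ r :=
      Metric.hausdorffDist_le_of_mem_dist hr0
        (fun x hx => ⟨x, hAB x hx, by simpa using hr0⟩) hBA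
    -- lower bound via the origin
    have hOB : pt2' 0 0 ∈ B := by
      refine ⟨⟨?_, ?_⟩, ?_, ?_⟩ <;> simp [pt2', truncEpigraph1]
    have hlow : r ≤ Metric.infDist (pt2' 0 0) A := by
      apply my_le_infDist hAne
      rintro w ⟨⟨hw0, hw1⟩, hw2, hw3⟩
      rw [dist_eucl2]
      have e0 : pt2' (0:ℝ) 0 0 = 0 := rfl
      have e1 : pt2' (0:ℝ) 0 1 = 0 := rfl
      rw [e0, e1]
      have hw1nn : 0 ≤ w 1 := le_trans (le_max_left _ _) hw2
      rw [show (0 - w 0)^2 + (0 - w 1)^2 = w 0 ^2 + w 1 ^2 by ring]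
      rw [Real.le_sqrt hr0 (by positivity)]
      have hr2 : r ^ 2 = α ^ 2 / (1 + α ^ 2) := by
        rw [hr, div_pow, Real.sq_sqrt hs2.le]
      rw [hr2]
      rcases le_or_gt α (w 0) with hc | hc
      · have h1 : α ^ 2 ≤ w 0 ^ 2 := by nlinarith
        have h2 : α ^ 2 / (1 + α ^ 2) ≤ α ^ 2 :=
          div_le_self (by positivity) (by nlinarith)
        nlinarith [sq_nonneg (w 1)]
      · have h6 : 1 - w 0 / α ≤ w 1 := le_trans (le_max_right _ _) hw2
        have hcancel : α * (w 0 / α) = w 0 := mul_div_cancel₀ _ hα.ne'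
        have hline : α ≤ w 0 + α * w 1 := by
          nlinarith [mul_le_mul_of_nonneg_left h6 hα.le]
        rw [div_le_iff₀ hs2]
        nlinarith [sq_nonneg (α * w 0 - w 1), sq_nonneg (w 0 + α * w 1)]
    have hge : r ≤ Metric.hausdorffDist A B := by
      calc r ≤ Metric.infDist (pt2' 0 0) A := hlow
        _ ≤ Metric.hausdorffDist B A :=
            Metric.infDist_le_hausdorffDist_of_mem hOB
              (by rwa [EMetric.hausdorffEdist_comm])
        _ = Metric.hausdorffDist A B := Metric.hausdorffDist_comm
    exact le_antisymm hle hge
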